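/- arXiv:1302.6678 — 5 statements merged into one kernel-verified Lean document; each statement's English description precedes it below -/
import Mathlib

section
/- Let 2 ≤ r ≤ 8. An element m ∈ M_r lies in the root set R_r = {m : ⟨m,k⟩ = 0, ⟨m,m⟩ = −2} if and only if there exist a sign ε ∈ {1,−1} and a permutation of the coordinates Q_1, …, Q_r after which ε·m equals one of the following: (i) Q_1 − Q_2; (ii) H − Q_1 − Q_2 − Q_3 (possible only when r ≥ 3); (iii) 2H − Q_1 − Q_2 − Q_3 − Q_4 − Q_5 − Q_6 (possible only when r ≥ 6); (iv) 3H − 2Q_1 − Q_2 − Q_3 − Q_4 − Q_5 − Q_6 − Q_7 − Q_8 (possible only when r = 8). -/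
/-- The Del Pezzo lattice of rank `1 + r`: `ℤ`-vectors with coordinates
`(H, Q_1, …, Q_r)`; coordinate `0` is the coefficient of `H` and coordinate
`i.succ` is the coefficient of `Q_i`. -/
abbrev DP (r : ℕ) := Fin (r + 1) → ℤ

/-- The bilinear form: `⟨H,H⟩ = 1`, `⟨Q_i,Q_i⟩ = -1`, other products of
distinct basis vectors vanish. -/
def dpForm {r : ℕ} (v w : DP r) : ℤ :=
  v 0 * w 0 - ∑ i : Fin r, v i.succ * w i.succ

/-- The canonical class `k = -3H + Q_1 + ⋯ + Q_r`. -/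
def dpK (r : ℕ) : DP r := fun i => if i.val = 0 then -3 else 1

/-- The root set `R_r = {m : ⟨m,k⟩ = 0, ⟨m,m⟩ = -2}`. -/
def RSet (r : ℕ) : Set (DP r) := {m | dpForm m (dpK r) = 0 ∧ dpForm m m = -2}

/-- The vector in the Del Pezzo lattice whose coordinates (w.r.t. `H, Q_1, …, Q_r`)
are given by the list `l` (padded with zeros). -/
def ofCoeffs {r : ℕ} (l : List ℤ) : DP r := fun i => l.getD i.val 0

/-- A permutation of `{1,…,r}` acts on the lattice by permuting the basis
vectors `Q_1, …, Q_r` and fixing `H`. -/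
def permAct {r : ℕ} (σ : Equiv.Perm (Fin r)) (m : DP r) : DP r :=
  Fin.cons (m 0) (fun j => m (σ j).succ)

open Finset

section Helpers

lemma dpK_zero (r : ℕ) : dpK r 0 = -3 := by simp [dpK]
lemma dpK_succ (r : ℕ) (i : Fin r) : dpK r i.succ = 1 := by simp [dpK]
lemma dpForm_comm {r : ℕ} (v w : DP r) : dpForm v w = dpForm w v := by
  unfold dpForm; congr 1; · ring
  exact Finset.sum_congr rfl fun i _ => by ring
lemma dpForm_smul {r : ℕ} (c : ℤ) (v w : DP r) : dpForm (c • v) w = c * dpForm v w := by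
  simp only [dpForm, Pi.smul_apply, smul_eq_mul, Finset.mul_sum, mul_sub]
  congr 1; · ring
  exact Finset.sum_congr rfl fun i _ => by ring
lemma dpForm_permAct {r : ℕ} (σ : Equiv.Perm (Fin r)) (v w : DP r) :
    dpForm (permAct σ v) (permAct σ w) = dpForm v w := by
  unfold dpForm permAct
  simp only [Fin.cons_zero, Fin.cons_succ]
  congr 1
  exact Equiv.sum_comp σ (fun j => v j.succ * w j.succ)
lemma permAct_dpK {r : ℕ} (σ : Equiv.Perm (Fin r)) : permAct σ (dpK r) = dpK r := by
  funext i
  refine Fin.cases ?_ (fun j => ?_) i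
  · simp [permAct, dpK_zero]
  · simp [permAct, dpK_succ]

lemma sum_fin_getD (r : ℕ) (l : List ℤ) (g : ℤ → ℤ) (hg : g 0 = 0) (h : l.length - 1 ≤ r) :
    ∑ i : Fin r, g (l.getD (i.val+1) 0) = ∑ i ∈ Finset.range (l.length - 1), g (l.getD (i+1) 0) := by
  rw [Fin.sum_univ_eq_sum_range (fun v => g (l.getD (v+1) 0))]
  symm
  apply Finset.sum_subset (Finset.range_subset_range.mpr h)
  intro i _ hi
  have hlen : l.length ≤ i + 1 := by simp [Finset.mem_range] at hi; omega
  rw [List.getD_eq_default _ _ hlen, hg]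

lemma ofCoeffs_zero {r : ℕ} (l : List ℤ) : ofCoeffs (r := r) l 0 = l.getD 0 0 := by
  simp [ofCoeffs]

lemma dpForm_ofCoeffs_k (r : ℕ) (l : List ℤ) (h : l.length - 1 ≤ r) :
    dpForm (ofCoeffs l) (dpK r) =
      l.getD 0 0 * (-3) - ∑ i ∈ Finset.range (l.length - 1), l.getD (i+1) 0 := by
  unfold dpForm
  rw [ofCoeffs_zero, dpK_zero]
  congr 1
  have : ∀ i : Fin r, ofCoeffs (r := r) l i.succ * dpK r i.succ = (fun a => a) (l.getD (i.val+1) 0) := by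
    intro i; simp [ofCoeffs, dpK_succ, Fin.val_succ]
  rw [Finset.sum_congr rfl fun i _ => this i]
  exact sum_fin_getD r l (fun a => a) rfl h

lemma dpForm_ofCoeffs_self (r : ℕ) (l : List ℤ) (h : l.length - 1 ≤ r) :
    dpForm (ofCoeffs (r := r) l) (ofCoeffs l) =
      l.getD 0 0 * l.getD 0 0 - ∑ i ∈ Finset.range (l.length - 1), l.getD (i+1) 0 * l.getD (i+1) 0 := by
  unfold dpForm
  rw [ofCoeffs_zero]
  congr 1
  have : ∀ i : Fin r, ofCoeffs (r := r) l i.succ * ofCoeffs (r := r) l i.succ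
      = (fun a => a * a) (l.getD (i.val+1) 0) := by
    intro i; simp [ofCoeffs, Fin.val_succ]
  rw [Finset.sum_congr rfl fun i _ => this i]
  exact sum_fin_getD r l (fun a => a * a) rfl h

lemma mem1 {r : ℕ} (h : 2 ≤ r) : ofCoeffs (r := r) [0,1,-1] ∈ RSet r := by
  constructor
  · rw [dpForm_ofCoeffs_k r _ (by simp; omega)]; decide
  · rw [dpForm_ofCoeffs_self r _ (by simp; omega)]; decide

lemma mem2 {r : ℕ} (h : 3 ≤ r) : ofCoeffs (r := r) [1,-1,-1,-1] ∈ RSet r := by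
  constructor
  · rw [dpForm_ofCoeffs_k r _ (by simp; omega)]; decide
  · rw [dpForm_ofCoeffs_self r _ (by simp; omega)]; decide

lemma mem3 {r : ℕ} (h : 6 ≤ r) : ofCoeffs (r := r) [2,-1,-1,-1,-1,-1,-1] ∈ RSet r := by
  constructor
  · rw [dpForm_ofCoeffs_k r _ (by simp; omega)]; decide
  · rw [dpForm_ofCoeffs_self r _ (by simp; omega)]; decide

lemma mem4 {r : ℕ} (h : r = 8) : ofCoeffs (r := r) [3,-2,-1,-1,-1,-1,-1,-1,-1] ∈ RSet r := by
  constructor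
  · rw [dpForm_ofCoeffs_k r _ (by simp; omega)]; decide
  · rw [dpForm_ofCoeffs_self r _ (by simp; omega)]; decide

lemma mem_RSet_of {r : ℕ} {m : DP r} {ε : ℤ} (hε : ε = 1 ∨ ε = -1)
    (σ : Equiv.Perm (Fin r)) (l : List ℤ) (hl : ofCoeffs (r := r) l ∈ RSet r)
    (heq : permAct σ (ε • m) = ofCoeffs l) : m ∈ RSet r := by
  obtain ⟨hl1, hl2⟩ := hl
  rw [← heq] at hl1 hl2
  rw [dpForm_permAct σ _ _] at hl2
  conv_lhs at hl1 => rw [show dpK r = permAct σ (dpK r) from (permAct_dpK σ).symm]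
  rw [dpForm_permAct σ _ _] at hl1
  rw [dpForm_smul] at hl1
  rw [show dpForm (ε • m) (ε • m) = ε * (ε * dpForm m m) by
    rw [dpForm_smul, dpForm_comm, dpForm_smul, dpForm_comm]] at hl2
  constructor
  · rcases hε with rfl | rfl <;> linarith
  · rcases hε with rfl | rfl <;> linarith

lemma ofC1 {r : ℕ} (j : Fin r) :
    ofCoeffs (r := r) [0, 1, -1] j.succ = if (j:ℕ) < 1 then 1 else if (j:ℕ) < 2 then -1 else 0 := by
  unfold ofCoeffs
  rcases j with ⟨v, hv⟩
  match v with
  | 0 => rfl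
  | 1 => rfl
  | (n+2) => simp [List.getD]

lemma ofC2 {r : ℕ} (j : Fin r) :
    ofCoeffs (r := r) [1, -1, -1, -1] j.succ = if (j:ℕ) < 3 then -1 else 0 := by
  unfold ofCoeffs
  rcases j with ⟨v, hv⟩
  match v with
  | 0 => rfl
  | 1 => rfl
  | 2 => rfl
  | (n+3) => simp [List.getD]

lemma ofC3 {r : ℕ} (j : Fin r) :
    ofCoeffs (r := r) [2, -1, -1, -1, -1, -1, -1] j.succ = if (j:ℕ) < 6 then -1 else 0 := by
  unfold ofCoeffs
  rcases j with ⟨v, hv⟩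
  match v with
  | 0 | 1 | 2 | 3 | 4 | 5 => rfl
  | (n+6) => simp [List.getD]

lemma ofC4 {r : ℕ} (j : Fin r) (hr : r = 8) :
    ofCoeffs (r := r) [3, -2, -1, -1, -1, -1, -1, -1, -1] j.succ = if (j:ℕ) < 1 then -2 else -1 := by
  unfold ofCoeffs
  rcases j with ⟨v, hv⟩
  subst hr
  match v, hv with
  | 0, _ | 1, _ | 2, _ | 3, _ | 4, _ | 5, _ | 6, _ | 7, _ => rfl

lemma exists_perm {r : ℕ} (x t : Fin r → ℤ)
    (h : ∀ v, (univ.filter fun i => x i = v).card = (univ.filter fun j => t j = v).card) :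
    ∃ σ : Equiv.Perm (Fin r), ∀ j, x (σ j) = t j := by
  have e : ∀ v : ℤ, { j // t j = v } ≃ { i // x i = v } := fun v =>
    (Fintype.equivOfCardEq (by simpa [Fintype.card_subtype] using (h v).symm))
  exact ⟨Equiv.ofFiberEquiv e, fun j => Equiv.ofFiberEquiv_map e j⟩

lemma card_filter_lt {r k : ℕ} (h : k ≤ r) :
    ((univ : Finset (Fin r)).filter fun j : Fin r => (j : ℕ) < k).card = k := by
  have : ((univ : Finset (Fin r)).filter fun j : Fin r => (j : ℕ) < k) =
      (univ : Finset (Fin k)).map (Fin.castLEEmb h) := by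
    ext j
    simp only [mem_filter, mem_univ, true_and, mem_map, Fin.castLEEmb]
    constructor
    · intro hj; exact ⟨⟨j, hj⟩, by simp [Fin.castLE, Fin.ext_iff]⟩
    · rintro ⟨i, _, rfl⟩; simp [Fin.castLE, i.isLt]
  rw [this, card_map, card_univ, Fintype.card_fin]

lemma card_filter_not_lt {r k : ℕ} (h : k ≤ r) :
    ((univ : Finset (Fin r)).filter fun j : Fin r => ¬ (j : ℕ) < k).card = r - k := by
  have h1 := Finset.card_filter_add_card_filter_not
    (s := (univ : Finset (Fin r))) (p := fun j : Fin r => (j : ℕ) < k)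
  rw [card_filter_lt h] at h1
  simp only [card_univ, Fintype.card_fin] at h1
  omega

lemma card_filter_val_eq {r c : ℕ} (h : c < r) :
    ((univ : Finset (Fin r)).filter fun j : Fin r => (j : ℕ) = c).card = 1 := by
  have : ((univ : Finset (Fin r)).filter fun j : Fin r => (j : ℕ) = c) = {⟨c, h⟩} := by
    ext j; simp [Fin.ext_iff]
  rw [this, card_singleton]

lemma nonneg_consec (a : ℤ) : 0 ≤ a * (a + 1) := by
  rcases le_or_gt 0 a with h | h
  · exact mul_nonneg h (by omega)
  · have := mul_nonneg (a := -a) (b := -(a+1)) (by omega) (by omega)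
    nlinarith

lemma sum_shift {r : ℕ} (x : Fin r → ℤ) (a b : ℤ) :
    ∑ i : Fin r, (x i + a) * (x i + b)
      = (∑ i : Fin r, x i * x i) + (a + b) * (∑ i : Fin r, x i) + r * (a * b) := by
  have h : ∀ i : Fin r, (x i + a) * (x i + b) = x i * x i + ((a+b) * x i + a*b) := fun i => by ring
  rw [Finset.sum_congr rfl fun i _ => h i, Finset.sum_add_distrib, Finset.sum_add_distrib,
    ← Finset.mul_sum, Finset.sum_const, card_univ, Fintype.card_fin]
  ring

lemma sum_two {r : ℕ} (x : Fin r → ℤ) {a b : ℤ} (hx : ∀ i, x i = a ∨ x i = b) :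
    ∑ i : Fin r, x i = (a - b) * ((univ.filter fun i => x i = a).card : ℤ) + b * r := by
  have h1 : ∑ i : Fin r, x i = ∑ i : Fin r, (if x i = a then a else b) := by
    refine Finset.sum_congr rfl fun i _ => ?_
    by_cases h' : x i = a
    · simp [h']
    · simp [h']; rcases hx i with h | h; exact absurd h h'; exact h
  have h2 := Finset.card_filter_add_card_filter_not
    (s := (univ : Finset (Fin r))) (p := fun i => x i = a)
  simp only [card_univ, Fintype.card_fin] at h2
  rw [h1, Finset.sum_ite, Finset.sum_const, Finset.sum_const]
  have h3 : (r : ℤ) = ((univ.filter fun i => x i = a).card : ℤ)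
      + ((univ.filter fun i => ¬ x i = a).card : ℤ) := by exact_mod_cast h2.symm
  rw [h3]
  push_cast
  ring

lemma fiber_two {r : ℕ} (x : Fin r → ℤ) {a b : ℤ} (hab : a ≠ b)
    (hx : ∀ i, x i = a ∨ x i = b) {k : ℕ}
    (hk : (univ.filter fun i => x i = a).card = k) (v : ℤ) :
    (univ.filter fun i => x i = v).card
      = (univ.filter fun j : Fin r => (if (j : ℕ) < k then a else b) = v).card := by
  have hkr : k ≤ r := by
    rw [← hk]
    simpa [card_univ] using Finset.card_filter_le (univ : Finset (Fin r)) (fun i => x i = a)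
  have hrhs : ∀ j : Fin r, ((if (j : ℕ) < k then a else b) = v) ↔
      ((v = a ∧ (j : ℕ) < k) ∨ (v = b ∧ ¬ (j : ℕ) < k)) := by
    intro j; split <;> rename_i h <;> constructor <;> intro h' <;> tauto
  by_cases hva : v = a
  · subst hva
    rw [hk]
    have : (univ.filter fun j : Fin r => (if (j : ℕ) < k then v else b) = v)
        = (univ.filter fun j : Fin r => (j : ℕ) < k) := by
      refine Finset.filter_congr fun j _ => ?_
      rw [hrhs j]; constructor
      · rintro (⟨_, h⟩ | ⟨h, _⟩); exact h; omega
      · intro h; exact Or.inl ⟨rfl, h⟩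
    rw [this, card_filter_lt hkr]
  by_cases hvb : v = b
  · subst hvb
    have hL : (univ.filter fun i => x i = v) = (univ.filter fun i => ¬ x i = a) := by
      refine Finset.filter_congr fun i _ => ?_
      constructor
      · intro h h'; omega
      · intro h; rcases hx i with h' | h'; exact absurd h' h; exact h'
    have hR : (univ.filter fun j : Fin r => (if (j : ℕ) < k then a else v) = v)
        = (univ.filter fun j : Fin r => ¬ (j : ℕ) < k) := by
      refine Finset.filter_congr fun j _ => ?_
      rw [hrhs j]; constructor
      · rintro (⟨h, _⟩ | ⟨_, h⟩); omega; exact h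
      · intro h; exact Or.inr ⟨rfl, h⟩
    have h2 := Finset.card_filter_add_card_filter_not
      (s := (univ : Finset (Fin r))) (p := fun i => x i = a)
    simp only [card_univ, Fintype.card_fin] at h2
    rw [hL, hR, card_filter_not_lt hkr]
    omega
  · have hL : (univ.filter fun i => x i = v) = ∅ := by
      rw [Finset.filter_eq_empty_iff]
      intro i _ h; rcases hx i with h' | h' <;> [exact hva (h ▸ h' ▸ rfl); exact hvb (h ▸ h' ▸ rfl)]
    have hR : (univ.filter fun j : Fin r => (if (j : ℕ) < k then a else b) = v) = ∅ := by
      rw [Finset.filter_eq_empty_iff]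
      intro j _ h
      rw [hrhs j] at h; tauto
    rw [hL, hR]

lemma fiber_d0 {r : ℕ} (h2 : 2 ≤ r) (x : Fin r → ℤ)
    (hx : ∀ i, x i = 1 ∨ x i = 0 ∨ x i = -1)
    (h1 : (univ.filter fun i => x i = 1).card = 1)
    (hm1 : (univ.filter fun i => x i = -1).card = 1) (v : ℤ) :
    (univ.filter fun i => x i = v).card
      = (univ.filter fun j : Fin r =>
          (if (j : ℕ) < 1 then 1 else if (j : ℕ) < 2 then (-1:ℤ) else 0) = v).card := by
  by_cases hv1 : v = 1
  · subst hv1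
    rw [h1]
    have : (univ.filter fun j : Fin r =>
          (if (j : ℕ) < 1 then (1:ℤ) else if (j : ℕ) < 2 then (-1:ℤ) else 0) = 1)
        = (univ.filter fun j : Fin r => (j : ℕ) < 1) := by
      refine Finset.filter_congr fun j _ => ?_
      split_ifs <;> constructor <;> intro h' <;> first | exact h'.elim | omega
    rw [this, card_filter_lt (by omega)]
  by_cases hvm : v = -1
  · subst hvm
    rw [hm1]
    have : (univ.filter fun j : Fin r =>
          (if (j : ℕ) < 1 then (1:ℤ) else if (j : ℕ) < 2 then (-1:ℤ) else 0) = -1)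
        = (univ.filter fun j : Fin r => (j : ℕ) = 1) := by
      refine Finset.filter_congr fun j _ => ?_
      split_ifs <;> constructor <;> intro h' <;> first | exact h'.elim | omega
    rw [this, card_filter_val_eq (by omega)]
  by_cases hv0 : v = 0
  · subst hv0
    have hdisj : Disjoint (univ.filter fun i => x i = 1) (univ.filter fun i => x i = -1) := by
      rw [Finset.disjoint_left]
      intro i hi hi'
      simp only [mem_filter] at hi hi'
      omega
    have hunion : (univ.filter fun i => x i = 1 ∨ x i = -1).card = 2 := by
      rw [Finset.filter_or, Finset.card_union_of_disjoint hdisj, h1, hm1]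
    have hLc : (univ.filter fun i => x i = 0) = (univ.filter fun i => ¬ (x i = 1 ∨ x i = -1)) := by
      refine Finset.filter_congr fun i _ => ?_
      rcases hx i with h | h | h <;> simp [h]
    have h2' := Finset.card_filter_add_card_filter_not
      (s := (univ : Finset (Fin r))) (p := fun i => x i = 1 ∨ x i = -1)
    simp only [card_univ, Fintype.card_fin] at h2'
    have hRc : (univ.filter fun j : Fin r =>
          (if (j : ℕ) < 1 then (1:ℤ) else if (j : ℕ) < 2 then (-1:ℤ) else 0) = 0)
        = (univ.filter fun j : Fin r => ¬ (j : ℕ) < 2) := by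
      refine Finset.filter_congr fun j _ => ?_
      split_ifs <;> constructor <;> intro h' <;> first | exact h'.elim | omega
    rw [hLc, hRc, card_filter_not_lt (by omega)]
    omega
  · have hL : (univ.filter fun i => x i = v) = ∅ := by
      rw [Finset.filter_eq_empty_iff]
      intro i _ h; rcases hx i with h' | h' | h' <;> omega
    have hR : (univ.filter fun j : Fin r =>
          (if (j : ℕ) < 1 then (1:ℤ) else if (j : ℕ) < 2 then (-1:ℤ) else 0) = v) = ∅ := by
      rw [Finset.filter_eq_empty_iff]
      intro j _ h
      split_ifs at h <;> first | exact h.elim | omega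
    rw [hL, hR]

end Helpers

/-- Characterization of the roots up to sign and permutation of the `Q_i`. -/
theorem mem_rootSet_iff (r : ℕ) (h2 : 2 ≤ r) (h8 : r ≤ 8) (m : DP r) :
    m ∈ RSet r ↔
      ∃ ε : ℤ, (ε = 1 ∨ ε = -1) ∧ ∃ σ : Equiv.Perm (Fin r),
        (permAct σ (ε • m) = ofCoeffs [0, 1, -1] ∨
         (3 ≤ r ∧ permAct σ (ε • m) = ofCoeffs [1, -1, -1, -1]) ∨
         (6 ≤ r ∧ permAct σ (ε • m) = ofCoeffs [2, -1, -1, -1, -1, -1, -1]) ∨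
         (r = 8 ∧ permAct σ (ε • m) =
            ofCoeffs [3, -2, -1, -1, -1, -1, -1, -1, -1])) := by
  constructor
  · rintro ⟨hk, hm⟩
    set ε : ℤ := if 0 ≤ m 0 then 1 else -1 with hεdef
    have hε : ε = 1 ∨ ε = -1 := by
      rw [hεdef]; split <;> simp
    set n : DP r := ε • m with hn
    have hnk : dpForm n (dpK r) = 0 := by rw [hn, dpForm_smul, hk, mul_zero]
    have hnn : dpForm n n = -2 := by
      rw [hn, show dpForm (ε • m) (ε • m) = ε * (ε * dpForm m m) by
        rw [dpForm_smul, dpForm_comm, dpForm_smul, dpForm_comm], hm]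
      rcases hε with h | h <;> rw [h] <;> ring
    have hd0 : 0 ≤ n 0 := by
      rw [hn]
      simp only [Pi.smul_apply, smul_eq_mul]
      rw [hεdef]
      split <;> rename_i h
      · linarith
      · push_neg at h; linarith
    unfold dpForm at hnk hnn
    rw [dpK_zero] at hnk
    rw [Finset.sum_congr rfl fun (i : Fin r) _ => by rw [dpK_succ r i, mul_one]] at hnk
    set x : Fin r → ℤ := fun i => n i.succ with hxdef
    set d : ℤ := n 0 with hddef
    have hsum : ∑ i : Fin r, x i = -3 * d := by linarith
    have hsq : ∑ i : Fin r, x i * x i = d * d + 2 := by linarith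
    have hr8 : (r : ℤ) ≤ 8 := by exact_mod_cast h8
    have hcs : 9 * (d * d) ≤ (r : ℤ) * (d * d + 2) := by
      have h := sq_sum_le_card_mul_sum_sq (s := (univ : Finset (Fin r))) (f := x)
      simp only [card_univ, Fintype.card_fin] at h
      calc 9 * (d * d) = (∑ i : Fin r, x i)^2 := by rw [hsum]; ring
        _ ≤ (r:ℤ) * ∑ i : Fin r, x i ^ 2 := h
        _ = (r:ℤ) * ∑ i : Fin r, x i * x i := by
              congr 1; exact Finset.sum_congr rfl fun i _ => by ring
        _ = (r:ℤ) * (d * d + 2) := by rw [hsq]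
    have hd4 : d ≤ 4 := by
      by_contra hcon
      push_neg at hcon
      nlinarith [mul_le_mul_of_nonneg_right hr8 (show (0:ℤ) ≤ d * d + 2 by nlinarith)]
    have hdcase : d = 0 ∨ d = 1 ∨ d = 2 ∨ d = 3 ∨ d = 4 := by omega
    -- general positivity facts
    have hpos12 : ∀ i : Fin r, 0 ≤ (x i + 1) * (x i + 2) := by
      intro i
      calc (0:ℤ) ≤ (x i + 1) * ((x i + 1) + 1) := nonneg_consec _
        _ = (x i + 1) * (x i + 2) := by ring
    have hpos01 : ∀ i : Fin r, 0 ≤ x i * (x i + 1) := fun i => nonneg_consec _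
    rcases hdcase with hd | hd | hd | hd | hd
    · -- d = 0 : case (i)
      rw [hd] at hsum hsq
      have hble : ∀ i : Fin r, x i * x i ≤ 2 := by
        intro i
        calc x i * x i ≤ ∑ j : Fin r, x j * x j :=
              Finset.single_le_sum (fun j _ => mul_self_nonneg (x j)) (mem_univ i)
          _ = 2 := by rw [hsq]; ring
      have tri : ∀ i, x i = 1 ∨ x i = 0 ∨ x i = -1 := by
        intro i
        have h := hble i
        have h1 : x i ≤ 1 := by nlinarith
        have h2 : -1 ≤ x i := by nlinarith
        omega
      -- count of 1's
      have hfsum : ∑ i : Fin r, x i * (x i + 1) = 2 := by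
        rw [show (fun i : Fin r => x i * (x i + 1)) = fun i => (x i + 0) * (x i + 1) by
          funext i; ring]
        rw [sum_shift x 0 1, hsum, hsq]; ring
      have hfvals : ∀ i : Fin r, x i * (x i + 1) = 2 ∨ x i * (x i + 1) = 0 := by
        intro i; rcases tri i with h | h | h <;> rw [h] <;> norm_num
      have hfcount := sum_two _ hfvals
      rw [hfsum] at hfcount
      have hfilt1 : (univ.filter fun i => x i * (x i + 1) = 2) = (univ.filter fun i => x i = 1) := by
        refine Finset.filter_congr fun i _ => ?_
        rcases tri i with h | h | h <;> rw [h] <;> norm_num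
      rw [hfilt1] at hfcount
      have hc1 : (univ.filter fun i => x i = 1).card = 1 := by omega
      -- count of -1's
      have hgsum : ∑ i : Fin r, x i * (x i + -1) = 2 := by
        rw [show (fun i : Fin r => x i * (x i + -1)) = fun i => (x i + 0) * (x i + -1) by
          funext i; ring]
        rw [sum_shift x 0 (-1), hsum, hsq]; ring
      have hgvals : ∀ i : Fin r, x i * (x i + -1) = 2 ∨ x i * (x i + -1) = 0 := by
        intro i; rcases tri i with h | h | h <;> rw [h] <;> norm_num
      have hgcount := sum_two _ hgvals
      rw [hgsum] at hgcount
      have hfilt2 : (univ.filter fun i => x i * (x i + -1) = 2)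
          = (univ.filter fun i => x i = -1) := by
        refine Finset.filter_congr fun i _ => ?_
        rcases tri i with h | h | h <;> rw [h] <;> norm_num
      rw [hfilt2] at hgcount
      have hcm1 : (univ.filter fun i => x i = -1).card = 1 := by omega
      obtain ⟨σ, hσ⟩ := exists_perm x _ (fiber_d0 h2 x tri hc1 hcm1)
      refine ⟨ε, hε, σ, Or.inl ?_⟩
      rw [← hn]
      funext i
      refine Fin.cases ?_ (fun j => ?_) i
      · show n 0 = ofCoeffs [0,1,-1] 0
        rw [ofCoeffs_zero, ← hddef, hd]; rfl
      · show n (σ j).succ = ofCoeffs [0,1,-1] j.succ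
        rw [ofC1 j]; exact hσ j
    · -- d = 1 : case (ii)
      rw [hd] at hsum hsq
      have hzsum : ∑ i : Fin r, x i * (x i + 1) = 0 := by
        rw [show (fun i : Fin r => x i * (x i + 1)) = fun i => (x i + 0) * (x i + 1) by
          funext i; ring]
        rw [sum_shift x 0 1, hsum, hsq]; ring
      have hzero : ∀ i ∈ (univ : Finset (Fin r)), x i * (x i + 1) = 0 :=
        (Finset.sum_eq_zero_iff_of_nonneg (fun i _ => hpos01 i)).1 hzsum
      have hvals : ∀ i : Fin r, x i = -1 ∨ x i = 0 := by
        intro i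
        have h := hzero i (mem_univ i)
        rcases mul_eq_zero.1 h with h' | h' <;> omega
      have hcount := sum_two x hvals
      rw [hsum] at hcount
      have hc : (univ.filter fun i => x i = -1).card = 3 := by omega
      have h3r : 3 ≤ r := by
        rw [← hc]
        simpa [card_univ] using Finset.card_filter_le (univ : Finset (Fin r)) (fun i => x i = -1)
      obtain ⟨σ, hσ⟩ := exists_perm x _ (fiber_two x (by norm_num) hvals hc)
      refine ⟨ε, hε, σ, Or.inr (Or.inl ⟨h3r, ?_⟩)⟩
      rw [← hn]
      funext i
      refine Fin.cases ?_ (fun j => ?_) i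
      · show n 0 = ofCoeffs [1,-1,-1,-1] 0
        rw [ofCoeffs_zero, ← hddef, hd]; rfl
      · show n (σ j).succ = ofCoeffs [1,-1,-1,-1] j.succ
        rw [ofC2 j]; exact hσ j
    · -- d = 2 : case (iii)
      rw [hd] at hsum hsq
      have hzsum : ∑ i : Fin r, x i * (x i + 1) = 0 := by
        rw [show (fun i : Fin r => x i * (x i + 1)) = fun i => (x i + 0) * (x i + 1) by
          funext i; ring]
        rw [sum_shift x 0 1, hsum, hsq]; ring
      have hzero : ∀ i ∈ (univ : Finset (Fin r)), x i * (x i + 1) = 0 :=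
        (Finset.sum_eq_zero_iff_of_nonneg (fun i _ => hpos01 i)).1 hzsum
      have hvals : ∀ i : Fin r, x i = -1 ∨ x i = 0 := by
        intro i
        have h := hzero i (mem_univ i)
        rcases mul_eq_zero.1 h with h' | h' <;> omega
      have hcount := sum_two x hvals
      rw [hsum] at hcount
      have hc : (univ.filter fun i => x i = -1).card = 6 := by omega
      have h6r : 6 ≤ r := by
        rw [← hc]
        simpa [card_univ] using Finset.card_filter_le (univ : Finset (Fin r)) (fun i => x i = -1)
      obtain ⟨σ, hσ⟩ := exists_perm x _ (fiber_two x (by norm_num) hvals hc)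
      refine ⟨ε, hε, σ, Or.inr (Or.inr (Or.inl ⟨h6r, ?_⟩))⟩
      rw [← hn]
      funext i
      refine Fin.cases ?_ (fun j => ?_) i
      · show n 0 = ofCoeffs [2,-1,-1,-1,-1,-1,-1] 0
        rw [ofCoeffs_zero, ← hddef, hd]; rfl
      · show n (σ j).succ = ofCoeffs [2,-1,-1,-1,-1,-1,-1] j.succ
        rw [ofC3 j]; exact hσ j
    · -- d = 3 : case (iv)
      rw [hd] at hsum hsq
      have hssum : ∑ i : Fin r, (x i + 1) * (x i + 2) = 2 * r - 16 := by
        rw [sum_shift x 1 2, hsum, hsq]; ring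
      have hge : (0:ℤ) ≤ 2 * r - 16 := hssum ▸ Finset.sum_nonneg fun i _ => hpos12 i
      have hr : r = 8 := by omega
      have hzsum : ∑ i : Fin r, (x i + 1) * (x i + 2) = 0 := by rw [hssum, hr]; norm_num
      have hzero : ∀ i ∈ (univ : Finset (Fin r)), (x i + 1) * (x i + 2) = 0 :=
        (Finset.sum_eq_zero_iff_of_nonneg (fun i _ => hpos12 i)).1 hzsum
      have hvals : ∀ i : Fin r, x i = -2 ∨ x i = -1 := by
        intro i
        have h := hzero i (mem_univ i)
        rcases mul_eq_zero.1 h with h' | h' <;> omega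
      have hcount := sum_two x hvals
      rw [hsum, show ((r:ℤ)) = 8 by exact_mod_cast congrArg (Nat.cast : ℕ → ℤ) hr] at hcount
      have hc : (univ.filter fun i => x i = -2).card = 1 := by omega
      obtain ⟨σ, hσ⟩ := exists_perm x _ (fiber_two x (by norm_num) hvals hc)
      refine ⟨ε, hε, σ, Or.inr (Or.inr (Or.inr ⟨hr, ?_⟩))⟩
      rw [← hn]
      funext i
      refine Fin.cases ?_ (fun j => ?_) i
      · show n 0 = ofCoeffs [3,-2,-1,-1,-1,-1,-1,-1,-1] 0
        rw [ofCoeffs_zero, ← hddef, hd]; rfl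
      · show n (σ j).succ = ofCoeffs [3,-2,-1,-1,-1,-1,-1,-1,-1] j.succ
        rw [ofC4 j hr]; exact hσ j
    · -- d = 4 : impossible
      exfalso
      rw [hd] at hsum hsq
      have hssum : ∑ i : Fin r, (x i + 1) * (x i + 2) = 2 * r - 18 := by
        rw [sum_shift x 1 2, hsum, hsq]; ring
      have hge : (0:ℤ) ≤ 2 * r - 18 := hssum ▸ Finset.sum_nonneg fun i _ => hpos12 i
      omega
  · rintro ⟨ε, hε, σ, h | ⟨h3, h⟩ | ⟨h6, h⟩ | ⟨hr, h⟩⟩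
    · exact mem_RSet_of hε σ _ (mem1 h2) h
    · exact mem_RSet_of hε σ _ (mem2 h3) h
    · exact mem_RSet_of hε σ _ (mem3 h6) h
    · exact mem_RSet_of hε σ _ (mem4 hr) h
end

section
/- Let σ : M_3 → M_3 be the ℤ-linear map determined by σ(H) = 2H − Q_1 − Q_2 − Q_3, σ(Q_1) = H − Q_2 − Q_3, σ(Q_2) = H − Q_1 − Q_3, σ(Q_3) = H − Q_1 − Q_2. Then σ is an involution preserving the bilinear form with σ(k) = k, and the numbers of σ-fixed elements in the Del Pezzo sets are: exactly 6 fixed elements in R_3, exactly 0 fixed elements in E_3, and exactly 3 fixed elements in G_3. -/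
/-- The Del Pezzo one-set `E_r = {m : ⟨m,k⟩ = -1, ⟨m,m⟩ = -1}`. -/
def ESet (r : ℕ) : Set (DP r) := {m | dpForm m (dpK r) = -1 ∧ dpForm m m = -1}

/-- The Del Pezzo two-set `G_r = {m : ⟨m,k⟩ = -2, ⟨m,m⟩ = 0}`. -/
def GSet (r : ℕ) : Set (DP r) := {m | dpForm m (dpK r) = -2 ∧ dpForm m m = 0}

lemma aux_root (m : Fin 4 → ℤ)
    (h1 : -3 * m 0 - m 1 - m 2 - m 3 = 0)
    (h2 : m 0 * m 0 - m 1 * m 1 - m 2 * m 2 - m 3 * m 3 = -2)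
    (h3 : m 0 + m 1 + m 2 + m 3 = 0) :
    m = ![0,1,-1,0] ∨ m = ![0,1,0,-1] ∨ m = ![0,-1,1,0] ∨ m = ![0,0,1,-1] ∨
      m = ![0,-1,0,1] ∨ m = ![0,0,-1,1] := by
  have h0 : m 0 = 0 := by linarith
  obtain ⟨a, ha⟩ : ∃ a, m 1 = a := ⟨_, rfl⟩
  obtain ⟨b, hb⟩ : ∃ b, m 2 = b := ⟨_, rfl⟩
  obtain ⟨c, hc⟩ : ∃ c, m 3 = c := ⟨_, rfl⟩
  rw [h0, ha, hb, hc] at h1 h2 h3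
  have hme : m = ![0, a, b, c] := by
    funext i; fin_cases i <;> simp [h0, ha, hb, hc]
  have ha1 : -1 ≤ a ∧ a ≤ 1 := by
    constructor <;> nlinarith [mul_self_nonneg b, mul_self_nonneg c]
  have hb1 : -1 ≤ b ∧ b ≤ 1 := by
    constructor <;> nlinarith [mul_self_nonneg a, mul_self_nonneg c]
  have hc1 : -1 ≤ c ∧ c ≤ 1 := by
    constructor <;> nlinarith [mul_self_nonneg a, mul_self_nonneg b]
  obtain ⟨ha1, ha2⟩ := ha1; obtain ⟨hb1, hb2⟩ := hb1; obtain ⟨hc1, hc2⟩ := hc1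
  rw [hme]
  interval_cases a <;> interval_cases b <;> interval_cases c <;> simp_all

lemma aux_two (m : Fin 4 → ℤ)
    (h1 : -3 * m 0 - m 1 - m 2 - m 3 = -2)
    (h2 : m 0 * m 0 - m 1 * m 1 - m 2 * m 2 - m 3 * m 3 = 0)
    (h3 : m 0 + m 1 + m 2 + m 3 = 0) :
    m = ![1,-1,0,0] ∨ m = ![1,0,-1,0] ∨ m = ![1,0,0,-1] := by
  have h0 : m 0 = 1 := by linarith
  obtain ⟨a, ha⟩ : ∃ a, m 1 = a := ⟨_, rfl⟩
  obtain ⟨b, hb⟩ : ∃ b, m 2 = b := ⟨_, rfl⟩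
  obtain ⟨c, hc⟩ : ∃ c, m 3 = c := ⟨_, rfl⟩
  rw [h0, ha, hb, hc] at h1 h2 h3
  have hme : m = ![1, a, b, c] := by
    funext i; fin_cases i <;> simp [h0, ha, hb, hc]
  have ha1 : -1 ≤ a ∧ a ≤ 1 := by
    constructor <;> nlinarith [mul_self_nonneg b, mul_self_nonneg c]
  have hb1 : -1 ≤ b ∧ b ≤ 1 := by
    constructor <;> nlinarith [mul_self_nonneg a, mul_self_nonneg c]
  have hc1 : -1 ≤ c ∧ c ≤ 1 := by
    constructor <;> nlinarith [mul_self_nonneg a, mul_self_nonneg b]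
  obtain ⟨ha1, ha2⟩ := ha1; obtain ⟨hb1, hb2⟩ := hb1; obtain ⟨hc1, hc2⟩ := hc1
  rw [hme]
  interval_cases a <;> interval_cases b <;> interval_cases c <;> simp_all

/-- The real structure on `M_3` of type `2A1` (degree 6): counts of fixed
elements in the Del Pezzo sets. -/
theorem realStructure_deg6 (σ : (Fin 4 → ℤ) →ₗ[ℤ] (Fin 4 → ℤ))
    (hH : σ (Pi.single 0 1) = ofCoeffs [2, -1, -1, -1])
    (hQ1 : σ (Pi.single 1 1) = ofCoeffs [1, 0, -1, -1])
    (hQ2 : σ (Pi.single 2 1) = ofCoeffs [1, -1, 0, -1])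
    (hQ3 : σ (Pi.single 3 1) = ofCoeffs [1, -1, -1, 0]) :
    (∀ v : DP 3, σ (σ v) = v) ∧
    (∀ v w : DP 3, dpForm (σ v) (σ w) = dpForm v w) ∧
    σ (dpK 3) = dpK 3 ∧
    {m ∈ RSet 3 | σ m = m}.ncard = 6 ∧
    {m ∈ ESet 3 | σ m = m}.ncard = 0 ∧
    {m ∈ GSet 3 | σ m = m}.ncard = 3 := by
  have hform : ∀ v : DP 3, σ v = ![2*v 0 + v 1 + v 2 + v 3,
      -v 0 - v 2 - v 3, -v 0 - v 1 - v 3, -v 0 - v 1 - v 2] := by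
    intro v
    have hv : v = v 0 • (Pi.single 0 1 : Fin 4 → ℤ) + v 1 • Pi.single 1 1
        + v 2 • Pi.single 2 1 + v 3 • Pi.single 3 1 := by
      funext i; fin_cases i <;> simp [Pi.single_apply]
    rw [hv]
    simp only [map_add, map_smul, hH, hQ1, hQ2, hQ3]
    funext i
    fin_cases i <;>
      simp [ofCoeffs, List.getD, show ((0:Fin 4):ℕ) = 0 from rfl,
        show ((1:Fin 4):ℕ) = 1 from rfl, show ((2:Fin 4):ℕ) = 2 from rfl,
        show ((3:Fin 4):ℕ) = 3 from rfl] <;> ring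
  have hbil : ∀ v w : DP 3, dpForm v w = v 0 * w 0 - v 1 * w 1 - v 2 * w 2 - v 3 * w 3 := by
    intro v w
    simp [dpForm, Fin.sum_univ_three, show (Fin.succ 0 : Fin 4) = 1 from rfl,
      show (Fin.succ 1 : Fin 4) = 2 from rfl, show (Fin.succ 2 : Fin 4) = 3 from rfl]
    ring
  have hkval : (dpK 3 : DP 3) = ![-3, 1, 1, 1] := by
    funext i; fin_cases i <;> rfl
  have hk : ∀ m : DP 3, dpForm m (dpK 3) = -3 * m 0 - m 1 - m 2 - m 3 := by
    intro m; rw [hbil, hkval]; simp; ring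
  have hm : ∀ m : DP 3, dpForm m m = m 0 * m 0 - m 1 * m 1 - m 2 * m 2 - m 3 * m 3 := by
    intro m; rw [hbil]
  have hfix : ∀ m : DP 3, σ m = m ↔ m 0 + m 1 + m 2 + m 3 = 0 := by
    intro m
    rw [hform]
    constructor
    · intro h
      have := congrFun h 0
      simp at this
      linarith
    · intro h
      funext i; fin_cases i <;> simp <;> linarith
  refine ⟨?_, ?_, ?_, ?_, ?_, ?_⟩
  · intro v
    rw [hform, hform]
    funext i; fin_cases i <;> simp <;> ring
  · intro v w
    rw [hform v, hform w, hbil, hbil]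
    simp; ring
  · rw [hform, hkval]
    funext i; fin_cases i <;> simp
  · have hset : {m ∈ RSet 3 | σ m = m} =
        (↑({![0,1,-1,0], ![0,1,0,-1], ![0,-1,1,0], ![0,0,1,-1], ![0,-1,0,1], ![0,0,-1,1]}
          : Finset (Fin 4 → ℤ)) : Set (Fin 4 → ℤ)) := by
      ext m
      simp only [Set.mem_setOf_eq, RSet, hk m, hm m, hfix m, Finset.coe_insert,
        Set.mem_insert_iff, Finset.coe_singleton, Set.mem_singleton_iff]
      constructor
      · rintro ⟨⟨h1, h2⟩, h3⟩
        exact aux_root m h1 h2 h3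
      · rintro (rfl | rfl | rfl | rfl | rfl | rfl) <;> refine ⟨⟨?_, ?_⟩, ?_⟩ <;> decide
    rw [hset, Set.ncard_coe_finset]
    decide
  · have hset : {m ∈ ESet 3 | σ m = m} = (∅ : Set (Fin 4 → ℤ)) := by
      ext m
      simp only [Set.mem_setOf_eq, ESet, hk m, hm m, hfix m, Set.mem_empty_iff_false,
        iff_false, not_and]
      rintro ⟨h1, h2⟩ h3
      omega
    rw [hset]
    simp
  · have hset : {m ∈ GSet 3 | σ m = m} =
        (↑({![1,-1,0,0], ![1,0,-1,0], ![1,0,0,-1]} : Finset (Fin 4 → ℤ)) : Set (Fin 4 → ℤ)) := by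
      ext m
      simp only [Set.mem_setOf_eq, GSet, hk m, hm m, hfix m, Finset.coe_insert,
        Set.mem_insert_iff, Finset.coe_singleton, Set.mem_singleton_iff]
      constructor
      · rintro ⟨⟨h1, h2⟩, h3⟩
        exact aux_two m h1 h2 h3
      · rintro (rfl | rfl | rfl) <;> refine ⟨⟨?_, ?_⟩, ?_⟩ <;> decide
    rw [hset, Set.ncard_coe_finset]
    decide
end

section
/- Let σ : M_5 → M_5 be the ℤ-linear map determined by σ(H) = 2H − Q_1 − Q_2 − Q_3, σ(Q_1) = H − Q_2 − Q_3, σ(Q_2) = H − Q_1 − Q_3, σ(Q_3) = H − Q_1 − Q_2, σ(Q_4) = Q_5, σ(Q_5) = Q_4. Then σ is an involution preserving the bilinear form with σ(k) = k, and the numbers of σ-fixed elements in the Del Pezzo sets are: exactly 12 fixed elements in R_5, exactly 0 fixed elements in E_5, and exactly 6 fixed elements in G_5. -/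
lemma dpForm_eval (v w : DP 5) : dpForm v w =
    v 0 * w 0 - (v 1 * w 1 + v 2 * w 2 + v 3 * w 3 + v 4 * w 4 + v 5 * w 5) := by
  simp [dpForm, Fin.sum_univ_five]

lemma pi_decomp (v : DP 5) : v = v 0 • Pi.single 0 1 + v 1 • Pi.single 1 1 +
    v 2 • Pi.single 2 1 + v 3 • Pi.single 3 1 + v 4 • Pi.single 4 1 + v 5 • Pi.single 5 1 := by
  funext i
  fin_cases i <;> simp [Pi.single, Function.update]

lemma sigma_apply (σ : (Fin 6 → ℤ) →ₗ[ℤ] (Fin 6 → ℤ))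
    (hH : σ (Pi.single 0 1) = ofCoeffs [2, -1, -1, -1, 0, 0])
    (hQ1 : σ (Pi.single 1 1) = ofCoeffs [1, 0, -1, -1, 0, 0])
    (hQ2 : σ (Pi.single 2 1) = ofCoeffs [1, -1, 0, -1, 0, 0])
    (hQ3 : σ (Pi.single 3 1) = ofCoeffs [1, -1, -1, 0, 0, 0])
    (hQ4 : σ (Pi.single 4 1) = ofCoeffs [0, 0, 0, 0, 0, 1])
    (hQ5 : σ (Pi.single 5 1) = ofCoeffs [0, 0, 0, 0, 1, 0]) (v : DP 5) :
    σ v = ![2*v 0 + v 1 + v 2 + v 3, -v 0 - v 2 - v 3, -v 0 - v 1 - v 3,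
            -v 0 - v 1 - v 2, v 5, v 4] := by
  have h : σ v = σ (v 0 • Pi.single 0 1 + v 1 • Pi.single 1 1 +
      v 2 • Pi.single 2 1 + v 3 • Pi.single 3 1 + v 4 • Pi.single 4 1 + v 5 • Pi.single 5 1) := by
    rw [← pi_decomp]
  rw [h]
  simp only [map_add, map_smul, hH, hQ1, hQ2, hQ3, hQ4, hQ5]
  funext i
  fin_cases i <;>
    simp [ofCoeffs, show ((3:Fin 6):ℕ)=3 from rfl, show ((4:Fin 6):ℕ)=4 from rfl,
      show ((5:Fin 6):ℕ)=5 from rfl, show ((3:Fin 5):ℕ)=3 from rfl, show ((4:Fin 5):ℕ)=4 from rfl, show (5:Fin 6) = (4:Fin 5).succ from rfl,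
      show (4:Fin 6) = (3:Fin 5).succ from rfl, Matrix.cons_val_succ] <;> ring

lemma dpK5 (m : DP 5) : dpForm m (dpK 5) =
    -3 * m 0 - (m 1 + m 2 + m 3 + m 4 + m 5) := by
  rw [dpForm_eval]
  norm_num [dpK, show ((3:Fin 6):ℕ)=3 from rfl, show ((4:Fin 6):ℕ)=4 from rfl,
    show ((5:Fin 6):ℕ)=5 from rfl]
  ring

lemma fix_iff (σ : (Fin 6 → ℤ) →ₗ[ℤ] (Fin 6 → ℤ))
    (hH : σ (Pi.single 0 1) = ofCoeffs [2, -1, -1, -1, 0, 0])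
    (hQ1 : σ (Pi.single 1 1) = ofCoeffs [1, 0, -1, -1, 0, 0])
    (hQ2 : σ (Pi.single 2 1) = ofCoeffs [1, -1, 0, -1, 0, 0])
    (hQ3 : σ (Pi.single 3 1) = ofCoeffs [1, -1, -1, 0, 0, 0])
    (hQ4 : σ (Pi.single 4 1) = ofCoeffs [0, 0, 0, 0, 0, 1])
    (hQ5 : σ (Pi.single 5 1) = ofCoeffs [0, 0, 0, 0, 1, 0]) (m : DP 5) :
    σ m = m ↔ (m 0 + m 1 + m 2 + m 3 = 0 ∧ m 4 = m 5) := by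
  rw [sigma_apply σ hH hQ1 hQ2 hQ3 hQ4 hQ5 m]
  constructor
  · intro h
    have h0 : 2 * m 0 + m 1 + m 2 + m 3 = m 0 := congrFun h 0
    have h4 : m 5 = m 4 := congrFun h 4
    omega
  · intro ⟨h1, h2⟩
    refine funext fun i => ?_
    fin_cases i
    · show 2 * m 0 + m 1 + m 2 + m 3 = m 0; omega
    · show -m 0 - m 2 - m 3 = m 1; omega
    · show -m 0 - m 1 - m 3 = m 2; omega
    · show -m 0 - m 1 - m 2 = m 3; omega
    · show m 5 = m 4; omega
    · show m 4 = m 5; omega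

lemma eq_ofCoeffs_iff (m : DP 5) (x0 x1 x2 x3 x4 x5 : ℤ) :
    m = ofCoeffs [x0,x1,x2,x3,x4,x5] ↔
    (m 0 = x0 ∧ m 1 = x1 ∧ m 2 = x2 ∧ m 3 = x3 ∧ m 4 = x4 ∧ m 5 = x5) := by
  constructor
  · intro h
    exact ⟨congrFun h 0, congrFun h 1, congrFun h 2, congrFun h 3, congrFun h 4, congrFun h 5⟩
  · rintro ⟨h0, h1, h2, h3, h4, h5⟩
    funext i
    fin_cases i <;> assumption

lemma keyR (a b c d e f : ℤ) (hk : -3 * a - (b + c + d + e + f) = 0)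
    (hm : a * a - (b * b + c * c + d * d + e * e + f * f) = -2)
    (h1 : a + b + c + d = 0) (h2 : e = f) :
    (a = 0 ∧ b = 1 ∧ c = -1 ∧ d = 0 ∧ e = 0 ∧ f = 0) ∨
    (a = 0 ∧ b = 1 ∧ c = 0 ∧ d = -1 ∧ e = 0 ∧ f = 0) ∨
    (a = 0 ∧ b = -1 ∧ c = 1 ∧ d = 0 ∧ e = 0 ∧ f = 0) ∨
    (a = 0 ∧ b = -1 ∧ c = 0 ∧ d = 1 ∧ e = 0 ∧ f = 0) ∨
    (a = 0 ∧ b = 0 ∧ c = 1 ∧ d = -1 ∧ e = 0 ∧ f = 0) ∨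
    (a = 0 ∧ b = 0 ∧ c = -1 ∧ d = 1 ∧ e = 0 ∧ f = 0) ∨
    (a = 1 ∧ b = -1 ∧ c = 0 ∧ d = 0 ∧ e = -1 ∧ f = -1) ∨
    (a = 1 ∧ b = 0 ∧ c = -1 ∧ d = 0 ∧ e = -1 ∧ f = -1) ∨
    (a = 1 ∧ b = 0 ∧ c = 0 ∧ d = -1 ∧ e = -1 ∧ f = -1) ∨
    (a = -1 ∧ b = 1 ∧ c = 0 ∧ d = 0 ∧ e = 1 ∧ f = 1) ∨
    (a = -1 ∧ b = 0 ∧ c = 1 ∧ d = 0 ∧ e = 1 ∧ f = 1) ∨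
    (a = -1 ∧ b = 0 ∧ c = 0 ∧ d = 1 ∧ e = 1 ∧ f = 1) := by
  have he : e = -a := by omega
  have hf : f = -a := by omega
  subst he hf
  have key : a * a + b * b + c * c + d * d = 2 := by nlinarith [hm]
  have ha : -1 ≤ a ∧ a ≤ 1 := by
    constructor <;> nlinarith [mul_self_nonneg b, mul_self_nonneg c, mul_self_nonneg d]
  have hb : -1 ≤ b ∧ b ≤ 1 := by
    constructor <;> nlinarith [mul_self_nonneg a, mul_self_nonneg c, mul_self_nonneg d]
  have hc : -1 ≤ c ∧ c ≤ 1 := by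
    constructor <;> nlinarith [mul_self_nonneg a, mul_self_nonneg b, mul_self_nonneg d]
  have hd : -1 ≤ d ∧ d ≤ 1 := by
    constructor <;> nlinarith [mul_self_nonneg a, mul_self_nonneg b, mul_self_nonneg c]
  clear hk hm
  have ha' : a = -1 ∨ a = 0 ∨ a = 1 := by omega
  have hb' : b = -1 ∨ b = 0 ∨ b = 1 := by omega
  have hc' : c = -1 ∨ c = 0 ∨ c = 1 := by omega
  have hd' : d = -1 ∨ d = 0 ∨ d = 1 := by omega
  clear ha hb hc hd
  rcases ha' with rfl|rfl|rfl <;> rcases hb' with rfl|rfl|rfl <;>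
    rcases hc' with rfl|rfl|rfl <;> rcases hd' with rfl|rfl|rfl <;>
    revert key h1 <;> norm_num

lemma keyE (a b c d e f : ℤ) (hk : -3 * a - (b + c + d + e + f) = -1)
    (h1 : a + b + c + d = 0) (h2 : e = f) : False := by omega

lemma keyG (a b c d e f : ℤ) (hk : -3 * a - (b + c + d + e + f) = -2)
    (hm : a * a - (b * b + c * c + d * d + e * e + f * f) = 0)
    (h1 : a + b + c + d = 0) (h2 : e = f) :
    (a = 1 ∧ b = -1 ∧ c = 0 ∧ d = 0 ∧ e = 0 ∧ f = 0) ∨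
    (a = 1 ∧ b = 0 ∧ c = -1 ∧ d = 0 ∧ e = 0 ∧ f = 0) ∨
    (a = 1 ∧ b = 0 ∧ c = 0 ∧ d = -1 ∧ e = 0 ∧ f = 0) ∨
    (a = 2 ∧ b = -1 ∧ c = -1 ∧ d = 0 ∧ e = -1 ∧ f = -1) ∨
    (a = 2 ∧ b = -1 ∧ c = 0 ∧ d = -1 ∧ e = -1 ∧ f = -1) ∨
    (a = 2 ∧ b = 0 ∧ c = -1 ∧ d = -1 ∧ e = -1 ∧ f = -1) := by
  have he : e = 1 - a := by omega
  have hf : f = 1 - a := by omega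
  subst he hf
  have key : b * b + c * c + d * d = -(a * a) + 4 * a - 2 := by linear_combination -hm
  have h14 : 4 * a ≤ 14 := by
    nlinarith [mul_self_nonneg b, mul_self_nonneg c, mul_self_nonneg d, mul_self_nonneg (a - 4)]
  have hA1 : 1 ≤ a := by
    nlinarith [mul_self_nonneg b, mul_self_nonneg c, mul_self_nonneg d, mul_self_nonneg a]
  have ha' : a = 1 ∨ a = 2 ∨ a = 3 := by omega
  have hbb : b * b ≤ 2 := by nlinarith [mul_self_nonneg c, mul_self_nonneg d, mul_self_nonneg (a - 2)]
  have hcc : c * c ≤ 2 := by nlinarith [mul_self_nonneg b, mul_self_nonneg d, mul_self_nonneg (a - 2)]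
  have hdd : d * d ≤ 2 := by nlinarith [mul_self_nonneg b, mul_self_nonneg c, mul_self_nonneg (a - 2)]
  have hb' : b = -1 ∨ b = 0 ∨ b = 1 := by
    have h1' : -1 ≤ b := by nlinarith [mul_self_nonneg (b + 1)]
    have h2' : b ≤ 1 := by nlinarith [mul_self_nonneg (b - 1)]
    omega
  have hc' : c = -1 ∨ c = 0 ∨ c = 1 := by
    have h1' : -1 ≤ c := by nlinarith [mul_self_nonneg (c + 1)]
    have h2' : c ≤ 1 := by nlinarith [mul_self_nonneg (c - 1)]
    omega
  have hd' : d = -1 ∨ d = 0 ∨ d = 1 := by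
    have h1' : -1 ≤ d := by nlinarith [mul_self_nonneg (d + 1)]
    have h2' : d ≤ 1 := by nlinarith [mul_self_nonneg (d - 1)]
    omega
  clear hk hm h14 hA1 hbb hcc hdd
  rcases ha' with rfl|rfl|rfl <;> rcases hb' with rfl|rfl|rfl <;>
    rcases hc' with rfl|rfl|rfl <;> rcases hd' with rfl|rfl|rfl <;>
    revert key h1 <;> norm_num

def Rlist : List (DP 5) :=
  [ofCoeffs [0, 1, -1, 0, 0, 0], ofCoeffs [0, 1, 0, -1, 0, 0],
   ofCoeffs [0, -1, 1, 0, 0, 0], ofCoeffs [0, -1, 0, 1, 0, 0],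
   ofCoeffs [0, 0, 1, -1, 0, 0], ofCoeffs [0, 0, -1, 1, 0, 0],
   ofCoeffs [1, -1, 0, 0, -1, -1], ofCoeffs [1, 0, -1, 0, -1, -1],
   ofCoeffs [1, 0, 0, -1, -1, -1], ofCoeffs [-1, 1, 0, 0, 1, 1],
   ofCoeffs [-1, 0, 1, 0, 1, 1], ofCoeffs [-1, 0, 0, 1, 1, 1]]

def Glist : List (DP 5) :=
  [ofCoeffs [1, -1, 0, 0, 0, 0], ofCoeffs [1, 0, -1, 0, 0, 0],
   ofCoeffs [1, 0, 0, -1, 0, 0], ofCoeffs [2, -1, -1, 0, -1, -1],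
   ofCoeffs [2, -1, 0, -1, -1, -1], ofCoeffs [2, 0, -1, -1, -1, -1]]

example : Rlist.toFinset.card = 12 := by decide
example : Glist.toFinset.card = 6 := by decide

/-- The real structure on `M_5` of type `2A1` (degree 4): counts of fixed
elements in the Del Pezzo sets. -/
theorem realStructure_deg4_2A1 (σ : (Fin 6 → ℤ) →ₗ[ℤ] (Fin 6 → ℤ))
    (hH : σ (Pi.single 0 1) = ofCoeffs [2, -1, -1, -1, 0, 0])
    (hQ1 : σ (Pi.single 1 1) = ofCoeffs [1, 0, -1, -1, 0, 0])
    (hQ2 : σ (Pi.single 2 1) = ofCoeffs [1, -1, 0, -1, 0, 0])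
    (hQ3 : σ (Pi.single 3 1) = ofCoeffs [1, -1, -1, 0, 0, 0])
    (hQ4 : σ (Pi.single 4 1) = ofCoeffs [0, 0, 0, 0, 0, 1])
    (hQ5 : σ (Pi.single 5 1) = ofCoeffs [0, 0, 0, 0, 1, 0]) :
    (∀ v : DP 5, σ (σ v) = v) ∧
    (∀ v w : DP 5, dpForm (σ v) (σ w) = dpForm v w) ∧
    σ (dpK 5) = dpK 5 ∧
    {m ∈ RSet 5 | σ m = m}.ncard = 12 ∧
    {m ∈ ESet 5 | σ m = m}.ncard = 0 ∧
    {m ∈ GSet 5 | σ m = m}.ncard = 6 := by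
  have sa := sigma_apply σ hH hQ1 hQ2 hQ3 hQ4 hQ5
  have fi := fix_iff σ hH hQ1 hQ2 hQ3 hQ4 hQ5
  refine ⟨?_, ?_, ?_, ?_, ?_, ?_⟩
  · -- involution
    intro v
    rw [sa v, sa]
    refine funext fun i => ?_
    fin_cases i
    · show 2 * (2 * v 0 + v 1 + v 2 + v 3) + (-v 0 - v 2 - v 3) + (-v 0 - v 1 - v 3)
        + (-v 0 - v 1 - v 2) = v 0; ring
    · show -(2 * v 0 + v 1 + v 2 + v 3) - (-v 0 - v 1 - v 3) - (-v 0 - v 1 - v 2) = v 1; ring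
    · show -(2 * v 0 + v 1 + v 2 + v 3) - (-v 0 - v 2 - v 3) - (-v 0 - v 1 - v 2) = v 2; ring
    · show -(2 * v 0 + v 1 + v 2 + v 3) - (-v 0 - v 2 - v 3) - (-v 0 - v 1 - v 3) = v 3; ring
    · show v 4 = v 4; rfl
    · show v 5 = v 5; rfl
  · -- preserves form
    intro v w
    rw [sa v, sa w, dpForm_eval, dpForm_eval]
    show (2 * v 0 + v 1 + v 2 + v 3) * (2 * w 0 + w 1 + w 2 + w 3)
        - ((-v 0 - v 2 - v 3) * (-w 0 - w 2 - w 3) + (-v 0 - v 1 - v 3) * (-w 0 - w 1 - w 3)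
          + (-v 0 - v 1 - v 2) * (-w 0 - w 1 - w 2) + v 5 * w 5 + v 4 * w 4) = _
    ring
  · -- fixes k
    rw [fi]
    constructor
    · show (-3 : ℤ) + 1 + 1 + 1 = 0; norm_num
    · show (1 : ℤ) = 1; rfl
  · -- R count
    have hset : {m ∈ RSet 5 | σ m = m} = ↑Rlist.toFinset := by
      ext m
      simp only [Set.mem_setOf_eq, RSet, Finset.coe_sort_coe, Finset.mem_coe,
        List.mem_toFinset, Rlist, List.mem_cons, List.not_mem_nil, or_false,
        eq_ofCoeffs_iff, fi m]
      constructor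
      · rintro ⟨⟨hk, hm⟩, hf1, hf2⟩
        rw [dpK5] at hk
        rw [dpForm_eval] at hm
        exact keyR (m 0) (m 1) (m 2) (m 3) (m 4) (m 5) hk hm hf1 hf2
      · intro h
        rcases h with h|h|h|h|h|h|h|h|h|h|h|h <;> obtain ⟨e0, e1, e2, e3, e4, e5⟩ := h <;>
          exact ⟨⟨by rw [dpK5, e0, e1, e2, e3, e4, e5]; norm_num,
            by rw [dpForm_eval, e0, e1, e2, e3, e4, e5]; norm_num⟩,
            by rw [e0, e1, e2, e3]; ring, by rw [e4, e5]⟩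
    rw [hset, Set.ncard_coe_finset]
    decide
  · -- E count
    have hset : {m ∈ ESet 5 | σ m = m} = ∅ := by
      ext m
      simp only [Set.mem_setOf_eq, ESet, Set.mem_empty_iff_false, iff_false, not_and, fi m]
      rintro ⟨hk, hm⟩ hf1 hf2
      rw [dpK5] at hk
      exact keyE (m 0) (m 1) (m 2) (m 3) (m 4) (m 5) hk hf1 hf2
    rw [hset, Set.ncard_empty]
  · -- G count
    have hset : {m ∈ GSet 5 | σ m = m} = ↑Glist.toFinset := by
      ext m
      simp only [Set.mem_setOf_eq, GSet, Finset.coe_sort_coe, Finset.mem_coe,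
        List.mem_toFinset, Glist, List.mem_cons, List.not_mem_nil, or_false,
        eq_ofCoeffs_iff, fi m]
      constructor
      · rintro ⟨⟨hk, hm⟩, hf1, hf2⟩
        rw [dpK5] at hk
        rw [dpForm_eval] at hm
        exact keyG (m 0) (m 1) (m 2) (m 3) (m 4) (m 5) hk hm hf1 hf2
      · intro h
        rcases h with h|h|h|h|h|h <;> obtain ⟨e0, e1, e2, e3, e4, e5⟩ := h <;>
          exact ⟨⟨by rw [dpK5, e0, e1, e2, e3, e4, e5]; norm_num,
            by rw [dpForm_eval, e0, e1, e2, e3, e4, e5]; norm_num⟩,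
            by rw [e0, e1, e2, e3]; ring, by rw [e4, e5]⟩
    rw [hset, Set.ncard_coe_finset]
    decide
end

section
/- Let σ : M_5 → M_5 be the ℤ-linear map determined by σ(H) = 3H − 2Q_1 − Q_2 − Q_3 − Q_4 − Q_5, σ(Q_1) = 2H − Q_1 − Q_2 − Q_3 − Q_4 − Q_5, and σ(Q_i) = H − Q_1 − Q_i for i = 2, 3, 4, 5. Then σ is an involution preserving the bilinear form with σ(k) = k, and the numbers of σ-fixed elements in the Del Pezzo sets are: exactly 0 fixed elements in R_5, exactly 0 fixed elements in E_5, and exactly 2 fixed elements in G_5. -/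
lemma dpK_eval : dpK 5 = ofCoeffs [-3, 1, 1, 1, 1, 1] := by
  funext j; fin_cases j <;> rfl

set_option maxHeartbeats 1000000

/-- The real structure on `M_5` of type `D4` (degree 4, e.g. a real torus):
counts of fixed elements in the Del Pezzo sets. -/
theorem realStructure_deg4_D4 (σ : (Fin 6 → ℤ) →ₗ[ℤ] (Fin 6 → ℤ))
    (hH : σ (Pi.single 0 1) = ofCoeffs [3, -2, -1, -1, -1, -1])
    (hQ1 : σ (Pi.single 1 1) = ofCoeffs [2, -1, -1, -1, -1, -1])
    (hQ2 : σ (Pi.single 2 1) = ofCoeffs [1, -1, -1, 0, 0, 0])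
    (hQ3 : σ (Pi.single 3 1) = ofCoeffs [1, -1, 0, -1, 0, 0])
    (hQ4 : σ (Pi.single 4 1) = ofCoeffs [1, -1, 0, 0, -1, 0])
    (hQ5 : σ (Pi.single 5 1) = ofCoeffs [1, -1, 0, 0, 0, -1]) :
    (∀ v : DP 5, σ (σ v) = v) ∧
    (∀ v w : DP 5, dpForm (σ v) (σ w) = dpForm v w) ∧
    σ (dpK 5) = dpK 5 ∧
    {m ∈ RSet 5 | σ m = m}.ncard = 0 ∧
    {m ∈ ESet 5 | σ m = m}.ncard = 0 ∧
    {m ∈ GSet 5 | σ m = m}.ncard = 2 := by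
  have key : ∀ v : Fin 6 → ℤ, σ v = ofCoeffs [3*v 0 + 2*v 1 + v 2 + v 3 + v 4 + v 5,
      -2*v 0 - v 1 - v 2 - v 3 - v 4 - v 5,
      -v 0 - v 1 - v 2, -v 0 - v 1 - v 3,
      -v 0 - v 1 - v 4, -v 0 - v 1 - v 5] := by
    intro v
    have hv : v = v 0 • Pi.single 0 1 + v 1 • Pi.single 1 1 + v 2 • Pi.single 2 1
        + v 3 • Pi.single 3 1 + v 4 • Pi.single 4 1 + v 5 • Pi.single 5 1 := by
      funext j; fin_cases j <;> simp [Pi.single_apply]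
    rw [hv]
    simp only [map_add, map_smul, hH, hQ1, hQ2, hQ3, hQ4, hQ5]
    funext j; fin_cases j <;>
      simp [ofCoeffs, show ((3:Fin 6):ℕ)=3 from rfl, show ((4:Fin 6):ℕ)=4 from rfl,
        show ((5:Fin 6):ℕ)=5 from rfl] <;> ring
  -- componentwise consequences of being fixed
  have fixed : ∀ m : Fin 6 → ℤ, σ m = m →
      (3*m 0 + 2*m 1 + m 2 + m 3 + m 4 + m 5 = m 0) ∧
      (-m 0 - m 1 - m 2 = m 2) ∧ (-m 0 - m 1 - m 3 = m 3) ∧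
      (-m 0 - m 1 - m 4 = m 4) ∧ (-m 0 - m 1 - m 5 = m 5) := by
    intro m hm
    rw [key m] at hm
    refine ⟨?_, ?_, ?_, ?_, ?_⟩
    · simpa [ofCoeffs] using congrFun hm 0
    · simpa [ofCoeffs] using congrFun hm 2
    · simpa [ofCoeffs, show ((3:Fin 6):ℕ)=3 from rfl] using congrFun hm 3
    · simpa [ofCoeffs, show ((4:Fin 6):ℕ)=4 from rfl] using congrFun hm 4
    · simpa [ofCoeffs, show ((5:Fin 6):ℕ)=5 from rfl] using congrFun hm 5
  refine ⟨?_, ?_, ?_, ?_, ?_, ?_⟩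
  · intro v
    rw [key v, key]
    funext j; fin_cases j <;>
      simp [ofCoeffs, show ((3:Fin 6):ℕ)=3 from rfl, show ((4:Fin 6):ℕ)=4 from rfl,
        show ((5:Fin 6):ℕ)=5 from rfl] <;> ring
  · intro v w
    rw [key v, key w, dpForm_eval, dpForm_eval]
    simp [ofCoeffs, show ((3:Fin 6):ℕ)=3 from rfl, show ((4:Fin 6):ℕ)=4 from rfl,
      show ((5:Fin 6):ℕ)=5 from rfl]
    ring
  · rw [key]
    funext j; fin_cases j <;>
      simp [ofCoeffs, dpK, show ((3:Fin 6):ℕ)=3 from rfl, show ((4:Fin 6):ℕ)=4 from rfl,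
        show ((5:Fin 6):ℕ)=5 from rfl]
  · have hempty : {m ∈ RSet 5 | σ m = m} = ∅ := by
      ext m
      simp only [Set.mem_sep_iff, Set.mem_empty_iff_false, iff_false, not_and, RSet,
        Set.mem_setOf_eq, and_imp]
      intro hk hm hfix
      obtain ⟨h0, h2, h3, h4, h5⟩ := fixed m hfix
      rw [dpForm_eval, dpK_eval] at hk
      rw [dpForm_eval] at hm
      simp only [ofCoeffs, List.getD] at hk
      norm_num [show ((3:Fin 6):ℕ)=3 from rfl, show ((4:Fin 6):ℕ)=4 from rfl,
        show ((5:Fin 6):ℕ)=5 from rfl] at hk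
      -- from linear eqs: m1 = m0, m2=m3=m4=m5, 2*m2 = -(m0+m1)
      have e1 : m 1 = m 0 := by linarith
      have e2 : m 3 = m 2 := by linarith
      have e3 : m 4 = m 2 := by linarith
      have e4 : m 5 = m 2 := by linarith
      rw [e1, e2, e3, e4] at hm
      have h42 : 2 * (m 2 * m 2) = 1 := by linarith
      obtain ⟨s, hs⟩ : ∃ s, m 2 * m 2 = s := ⟨_, rfl⟩
      rw [hs] at h42; omega
    rw [hempty]; exact Set.ncard_empty _
  · have hempty : {m ∈ ESet 5 | σ m = m} = ∅ := by
      ext m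
      simp only [Set.mem_sep_iff, Set.mem_empty_iff_false, iff_false, not_and, ESet,
        Set.mem_setOf_eq, and_imp]
      intro hk hm hfix
      obtain ⟨h0, h2, h3, h4, h5⟩ := fixed m hfix
      rw [dpForm_eval, dpK_eval] at hk
      simp only [ofCoeffs, List.getD] at hk
      norm_num [show ((3:Fin 6):ℕ)=3 from rfl, show ((4:Fin 6):ℕ)=4 from rfl,
        show ((5:Fin 6):ℕ)=5 from rfl] at hk
      omega
    rw [hempty]; exact Set.ncard_empty _
  · have hset : {m ∈ GSet 5 | σ m = m} =
        {ofCoeffs [1, -1, 0, 0, 0, 0], ofCoeffs [2, 0, -1, -1, -1, -1]} := by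
      ext m
      simp only [Set.mem_sep_iff, Set.mem_insert_iff, Set.mem_singleton_iff, GSet,
        Set.mem_setOf_eq]
      constructor
      · rintro ⟨⟨hk, hm⟩, hfix⟩
        obtain ⟨h0, h2, h3, h4, h5⟩ := fixed m hfix
        rw [dpForm_eval, dpK_eval] at hk
        rw [dpForm_eval] at hm
        simp only [ofCoeffs, List.getD] at hk
        norm_num [show ((3:Fin 6):ℕ)=3 from rfl, show ((4:Fin 6):ℕ)=4 from rfl,
          show ((5:Fin 6):ℕ)=5 from rfl] at hk
        have e2 : m 3 = m 2 := by linarith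
        have e3 : m 4 = m 2 := by linarith
        have e4 : m 5 = m 2 := by linarith
        have ea : m 0 = 1 - m 2 := by linarith
        have eb : m 1 = -1 - m 2 := by linarith
        rw [e2, e3, e4, ea, eb] at hm
        have hcc : 4 * (m 2 * (m 2 + 1)) = 0 := by ring_nf; ring_nf at hm; linarith
        have hc0 : m 2 * (m 2 + 1) = 0 := by linarith
        rcases mul_eq_zero.mp hc0 with hc | hc
        · left
          funext j; fin_cases j <;>
            simp [ofCoeffs, show ((3:Fin 6):ℕ)=3 from rfl, show ((4:Fin 6):ℕ)=4 from rfl,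
              show ((5:Fin 6):ℕ)=5 from rfl] <;> omega
        · right
          have hc' : m 2 = -1 := by linarith
          funext j; fin_cases j <;>
            simp [ofCoeffs, show ((3:Fin 6):ℕ)=3 from rfl, show ((4:Fin 6):ℕ)=4 from rfl,
              show ((5:Fin 6):ℕ)=5 from rfl] <;> omega
      · rintro (rfl | rfl) <;>
          refine ⟨⟨?_, ?_⟩, ?_⟩
        · rw [dpForm_eval, dpK_eval]
          norm_num [ofCoeffs, show ((3:Fin 6):ℕ)=3 from rfl,
            show ((4:Fin 6):ℕ)=4 from rfl, show ((5:Fin 6):ℕ)=5 from rfl]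
        · rw [dpForm_eval]
          norm_num [ofCoeffs, show ((3:Fin 6):ℕ)=3 from rfl,
            show ((4:Fin 6):ℕ)=4 from rfl, show ((5:Fin 6):ℕ)=5 from rfl]
        · rw [key]; funext j; fin_cases j <;>
            norm_num [ofCoeffs, show ((3:Fin 6):ℕ)=3 from rfl,
              show ((4:Fin 6):ℕ)=4 from rfl, show ((5:Fin 6):ℕ)=5 from rfl]
        · rw [dpForm_eval, dpK_eval]
          norm_num [ofCoeffs, show ((3:Fin 6):ℕ)=3 from rfl,
            show ((4:Fin 6):ℕ)=4 from rfl, show ((5:Fin 6):ℕ)=5 from rfl]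
        · rw [dpForm_eval]
          norm_num [ofCoeffs, show ((3:Fin 6):ℕ)=3 from rfl,
            show ((4:Fin 6):ℕ)=4 from rfl, show ((5:Fin 6):ℕ)=5 from rfl]
        · rw [key]; funext j; fin_cases j <;>
            norm_num [ofCoeffs, show ((3:Fin 6):ℕ)=3 from rfl,
              show ((4:Fin 6):ℕ)=4 from rfl, show ((5:Fin 6):ℕ)=5 from rfl]
    rw [hset]
    rw [Set.ncard_pair]
    intro h
    have := congrFun h 0
    simp [ofCoeffs] at this
end

section
/- Let σ : M_8 → M_8 be the ℤ-linear map determined by σ(H) = 17H − 6(Q_1 + ⋯ + Q_8) and σ(Q_i) = 6H − 3Q_i − 2·Σ_{j ≠ i} Q_j for i = 1, …, 8. Then σ is an involution preserving the bilinear form with σ(k) = k, and σ fixes no element of R_8, no element of E_8, and no element of G_8. -/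
lemma sigma_closed (σ : (Fin 9 → ℤ) →ₗ[ℤ] (Fin 9 → ℤ))
    (hH : σ (Pi.single 0 1) = fun j : Fin 9 => if j.val = 0 then (17 : ℤ) else -6)
    (hQ : ∀ i : Fin 8, σ (Pi.single i.succ 1) =
      fun j : Fin 9 => if j.val = 0 then (6 : ℤ) else if j = i.succ then -3 else -2)
    (v : Fin 9 → ℤ) :
    σ v = fun j => if j.val = 0 then 17 * v 0 + 6 * ∑ i : Fin 8, v i.succ
          else -6 * v 0 - 2 * (∑ i : Fin 8, v i.succ) - v j := by
  have hv : v = ∑ i : Fin 9, v i • Pi.single i (1:ℤ) := by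
    funext j
    simp [Finset.sum_apply, Pi.single_apply]
  conv_lhs => rw [hv, map_sum]
  simp only [map_smul]
  rw [Fin.sum_univ_succ, hH]
  simp only [hQ]
  funext j
  rcases Fin.eq_zero_or_eq_succ j with rfl | ⟨k, rfl⟩
  · simp [Finset.sum_apply, Finset.mul_sum, mul_comm]
  · simp only [Finset.sum_apply, Pi.add_apply, Pi.smul_apply, smul_eq_mul,
      Fin.val_succ, Nat.succ_ne_zero, if_false, Fin.succ_inj]
    have key : ∑ i : Fin 8, v i.succ * (if k = i then (-3:ℤ) else -2)
        = -2 * (∑ i : Fin 8, v i.succ) - v k.succ := by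
      have h1 : ∀ i : Fin 8, v i.succ * (if k = i then (-3:ℤ) else -2)
          = -2 * v i.succ + (if i = k then -v i.succ else 0) := by
        intro i
        rcases eq_or_ne i k with rfl | h
        · simp; ring
        · simp [h, Ne.symm h]; ring
      rw [Finset.sum_congr rfl fun i _ => h1 i, Finset.sum_add_distrib,
        Finset.sum_ite_eq' Finset.univ k (fun i => -v i.succ)]
      simp [Finset.mul_sum]
      ring
    rw [key]; ring

lemma sigma_zero (σ : (Fin 9 → ℤ) →ₗ[ℤ] (Fin 9 → ℤ))
    (hH : σ (Pi.single 0 1) = fun j : Fin 9 => if j.val = 0 then (17 : ℤ) else -6)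
    (hQ : ∀ i : Fin 8, σ (Pi.single i.succ 1) =
      fun j : Fin 9 => if j.val = 0 then (6 : ℤ) else if j = i.succ then -3 else -2)
    (v : Fin 9 → ℤ) :
    σ v 0 = 17 * v 0 + 6 * ∑ i : Fin 8, v i.succ := by
  rw [sigma_closed σ hH hQ v]
  simp

lemma sigma_succ (σ : (Fin 9 → ℤ) →ₗ[ℤ] (Fin 9 → ℤ))
    (hH : σ (Pi.single 0 1) = fun j : Fin 9 => if j.val = 0 then (17 : ℤ) else -6)
    (hQ : ∀ i : Fin 8, σ (Pi.single i.succ 1) =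
      fun j : Fin 9 => if j.val = 0 then (6 : ℤ) else if j = i.succ then -3 else -2)
    (v : Fin 9 → ℤ) (j : Fin 8) :
    σ v j.succ = -6 * v 0 - 2 * (∑ i : Fin 8, v i.succ) - v j.succ := by
  rw [sigma_closed σ hH hQ v]
  simp [Fin.val_succ]

lemma sigma_sum (σ : (Fin 9 → ℤ) →ₗ[ℤ] (Fin 9 → ℤ))
    (hH : σ (Pi.single 0 1) = fun j : Fin 9 => if j.val = 0 then (17 : ℤ) else -6)
    (hQ : ∀ i : Fin 8, σ (Pi.single i.succ 1) =
      fun j : Fin 9 => if j.val = 0 then (6 : ℤ) else if j = i.succ then -3 else -2)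
    (v : Fin 9 → ℤ) :
    ∑ i : Fin 8, σ v i.succ = -48 * v 0 - 17 * ∑ i : Fin 8, v i.succ := by
  rw [Finset.sum_congr rfl fun i _ => sigma_succ σ hH hQ v i]
  simp [Finset.sum_sub_distrib, Finset.sum_const]
  ring

lemma fixed_char (σ : (Fin 9 → ℤ) →ₗ[ℤ] (Fin 9 → ℤ))
    (hH : σ (Pi.single 0 1) = fun j : Fin 9 => if j.val = 0 then (17 : ℤ) else -6)
    (hQ : ∀ i : Fin 8, σ (Pi.single i.succ 1) =
      fun j : Fin 9 => if j.val = 0 then (6 : ℤ) else if j = i.succ then -3 else -2)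
    (m : Fin 9 → ℤ) (h : σ m = m) :
    ∃ a : ℤ, m 0 = 3 * a ∧ ∀ i : Fin 8, m i.succ = -a := by
  set s := ∑ i : Fin 8, m i.succ with hs
  have h0 : 17 * m 0 + 6 * s = m 0 := by
    rw [← sigma_zero σ hH hQ m, h]
  have hj : ∀ j : Fin 8, m j.succ = -3 * m 0 - s := by
    intro j
    have h2 := congrFun h j.succ
    rw [sigma_succ σ hH hQ m j] at h2
    linarith
  refine ⟨3 * m 0 + s, by linarith, fun i => ?_⟩
  rw [hj i]; ring

/-- The real structure on `M_8` of type `E8` (degree 1): it fixes no element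
of the Del Pezzo sets. -/
theorem realStructure_deg1_E8 (σ : (Fin 9 → ℤ) →ₗ[ℤ] (Fin 9 → ℤ))
    (hH : σ (Pi.single 0 1) = fun j : Fin 9 => if j.val = 0 then (17 : ℤ) else -6)
    (hQ : ∀ i : Fin 8, σ (Pi.single i.succ 1) =
      fun j : Fin 9 => if j.val = 0 then (6 : ℤ) else if j = i.succ then -3 else -2) :
    (∀ v : DP 8, σ (σ v) = v) ∧
    (∀ v w : DP 8, dpForm (σ v) (σ w) = dpForm v w) ∧
    σ (dpK 8) = dpK 8 ∧
    (∀ m ∈ RSet 8, σ m ≠ m) ∧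
    (∀ m ∈ ESet 8, σ m ≠ m) ∧
    (∀ m ∈ GSet 8, σ m ≠ m) := by
  have hsum : ∀ (c : ℤ) (f : Fin 8 → ℤ), (∀ i, f i = c) → ∑ i : Fin 8, f i = 8 * c := by
    intro c f hf
    rw [Finset.sum_congr rfl fun i _ => hf i]
    simp [Finset.sum_const]
  have fixed_form : ∀ m : Fin 9 → ℤ, σ m = m →
      ∃ a : ℤ, dpForm m (dpK 8) = -a ∧ dpForm m m = a * a := by
    intro m hm
    obtain ⟨a, h0, hsucc⟩ := fixed_char σ hH hQ m hm
    refine ⟨a, ?_, ?_⟩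
    · have h1 : ∑ i : Fin 8, m i.succ * dpK 8 i.succ = 8 * (-a) := by
        refine hsum _ _ fun i => ?_
        simp [dpK, Fin.val_succ, hsucc i]
      unfold dpForm
      rw [h1, h0]
      simp [dpK]
      ring
    · have h1 : ∑ i : Fin 8, m i.succ * m i.succ = 8 * (a * a) := by
        refine hsum _ _ fun i => ?_
        rw [hsucc i]; ring
      unfold dpForm
      rw [h1, h0]
      ring
  refine ⟨?_, ?_, ?_, ?_, ?_, ?_⟩
  · intro v
    funext j
    rcases Fin.eq_zero_or_eq_succ j with rfl | ⟨k, rfl⟩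
    · rw [sigma_zero σ hH hQ, sigma_sum σ hH hQ, sigma_zero σ hH hQ]
      ring
    · rw [sigma_succ σ hH hQ, sigma_sum σ hH hQ, sigma_zero σ hH hQ,
        sigma_succ σ hH hQ]
      ring
  · intro v w
    have hterm : ∀ i : Fin 8, σ v i.succ * σ w i.succ =
        (-6 * v 0 - 2 * ∑ i : Fin 8, v i.succ) * (-6 * w 0 - 2 * ∑ i : Fin 8, w i.succ)
        - (-6 * v 0 - 2 * ∑ i : Fin 8, v i.succ) * w i.succ
        - (-6 * w 0 - 2 * ∑ i : Fin 8, w i.succ) * v i.succ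
        + v i.succ * w i.succ := by
      intro i
      rw [sigma_succ σ hH hQ, sigma_succ σ hH hQ]
      ring
    simp only [dpForm, sigma_zero σ hH hQ,
      Finset.sum_congr rfl fun i (_ : i ∈ Finset.univ) => hterm i,
      Finset.sum_add_distrib, Finset.sum_sub_distrib, Finset.sum_const, ← Finset.mul_sum]
    simp only [Finset.card_univ, Fintype.card_fin, nsmul_eq_mul]
    ring
  · have hK : ∑ i : Fin 8, dpK 8 i.succ = 8 := by
      simp [dpK, Fin.val_succ]
    funext j
    rcases Fin.eq_zero_or_eq_succ j with rfl | ⟨k, rfl⟩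
    · rw [sigma_zero σ hH hQ, hK]; simp [dpK]
    · rw [sigma_succ σ hH hQ, hK]; simp [dpK, Fin.val_succ]
  · rintro m ⟨h1, h2⟩ hm
    obtain ⟨a, ha1, ha2⟩ := fixed_form m hm
    rw [ha1] at h1; rw [ha2] at h2
    nlinarith
  · rintro m ⟨h1, h2⟩ hm
    obtain ⟨a, ha1, ha2⟩ := fixed_form m hm
    rw [ha1] at h1; rw [ha2] at h2
    nlinarith
  · rintro m ⟨h1, h2⟩ hm
    obtain ⟨a, ha1, ha2⟩ := fixed_form m hm
    rw [ha1] at h1; rw [ha2] at h2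
    nlinarith
end
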